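/- arXiv:2105.05296 — 4 statements merged into one kernel-verified Lean document; each statement's English description precedes it below -/
import Mathlib

section
/- Let I be a finite index set, let w : I → ℝ be prior-step particle weights with w j > 0 for all j ∈ I and ∑_{j ∈ I} w j = 1, let w' : I → ℝ be posterior-step particle weights with w' i ≥ 0 for all i ∈ I, let p : I → ℝ satisfy p i > 0 for all i ∈ I, let q : I × I → ℝ satisfy 0 < q i j ≤ m for all i, j ∈ I (where m is an upper bound on the transition model), and let A ⊆ I be a subset. Then −∑_{i ∈ I} w' i · log(p i · ∑_{j ∈ I} q i j · w j) ≥ −∑_{i ∈ A} w' i · log(p i · ∑_{j ∈ I} q i j · w j) − ∑_{i ∈ I \ A} w' i · log(m · p i). (Lower bound of Theorem 3 on term (b) of the Boers et al. particle-based differential-entropy estimator.) -/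
/-- Lower bound of Theorem 3 on term (b) of the Boers et al. particle-based
differential-entropy estimator. -/
theorem stmt_2 {I : Type*} [Fintype I] [DecidableEq I]
    (w w' p : I → ℝ) (q : I → I → ℝ) (m : ℝ)
    (hw : ∀ j, 0 < w j) (hwsum : ∑ j, w j = 1)
    (hw' : ∀ i, 0 ≤ w' i)
    (hp : ∀ i, 0 < p i)
    (hq : ∀ i j, 0 < q i j) (hqm : ∀ i j, q i j ≤ m)
    (A : Finset I) :
    -∑ i, w' i * Real.log (p i * ∑ j, q i j * w j) ≥
      (-∑ i ∈ A, w' i * Real.log (p i * ∑ j, q i j * w j))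
        - ∑ i ∈ Finset.univ \ A, w' i * Real.log (m * p i) := by
  have hA : A ⊆ Finset.univ := Finset.subset_univ A
  have hsplit : ∑ i, w' i * Real.log (p i * ∑ j, q i j * w j)
      = ∑ i ∈ A, w' i * Real.log (p i * ∑ j, q i j * w j)
        + ∑ i ∈ Finset.univ \ A, w' i * Real.log (p i * ∑ j, q i j * w j) :=
    by rw [← Finset.sum_sdiff hA]; ring
  have hbound : ∑ i ∈ Finset.univ \ A, w' i * Real.log (p i * ∑ j, q i j * w j)
      ≤ ∑ i ∈ Finset.univ \ A, w' i * Real.log (m * p i) := by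
    apply Finset.sum_le_sum
    intro i _
    apply mul_le_mul_of_nonneg_left _ (hw' i)
    apply Real.log_le_log
    · have : 0 < ∑ j, q i j * w j :=
        Finset.sum_pos (fun j _ => mul_pos (hq i j) (hw j)) (Finset.univ_nonempty_iff.mpr ⟨i⟩)
      exact mul_pos (hp i) this
    · have hsum : ∑ j, q i j * w j ≤ m := by
        calc ∑ j, q i j * w j ≤ ∑ j, m * w j :=
          Finset.sum_le_sum fun j _ =>
            mul_le_mul_of_nonneg_right (hqm i j) (hw j).le
        _ = m := by rw [← Finset.mul_sum, hwsum, mul_one]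
      calc p i * ∑ j, q i j * w j ≤ p i * m :=
        mul_le_mul_of_nonneg_left hsum (hp i).le
      _ = m * p i := mul_comm _ _
  linarith [hsplit, hbound]
end

section
/- Let I be a finite index set, let w : I → ℝ be prior-step particle weights with w j > 0 for all j ∈ I and ∑_{j ∈ I} w j = 1, let w' : I → ℝ be posterior-step particle weights with w' i ≥ 0 for all i ∈ I, let p : I → ℝ satisfy 0 < p i ≤ n for all i ∈ I, let q : I × I → ℝ satisfy 0 < q i j ≤ m for all i, j ∈ I, and let A, A' ⊆ I be nonempty subsets. Define Ĥ ≜ log(∑_{i ∈ I} p i · w i) − ∑_{i ∈ I} w' i · log(p i · ∑_{j ∈ I} q i j · w j) (the Boers et al. entropy estimator). Then Ĥ ≥ log(∑_{i ∈ A} p i · w i) − ∑_{i ∈ A'} w' i · log(p i · ∑_{j ∈ I} q i j · w j) − ∑_{i ∈ I \ A'} w' i · log(m · p i). (Combined simplification lower bound lb(b^s_k, b^s_{k+1}, b_k, b_{k+1}) ≤ Ĥ(b_{k+1}), obtained by combining the lower bounds of Theorems 2 and 3.) -/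
/-- Combined simplification lower bound on the Boers et al. entropy estimator,
obtained by combining the lower bounds of Theorems 2 and 3. -/
theorem stmt_4 {I : Type*} [Fintype I] [DecidableEq I]
    (w w' p : I → ℝ) (q : I → I → ℝ) (n m : ℝ)
    (hw : ∀ j, 0 < w j) (hwsum : ∑ j, w j = 1)
    (hw' : ∀ i, 0 ≤ w' i)
    (hp : ∀ i, 0 < p i) (hpn : ∀ i, p i ≤ n)
    (hq : ∀ i j, 0 < q i j) (hqm : ∀ i j, q i j ≤ m)
    (A A' : Finset I) (hA : A.Nonempty) (hA' : A'.Nonempty) :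
    Real.log (∑ i, p i * w i)
        - ∑ i, w' i * Real.log (p i * ∑ j, q i j * w j) ≥
      Real.log (∑ i ∈ A, p i * w i)
        - ∑ i ∈ A', w' i * Real.log (p i * ∑ j, q i j * w j)
        - ∑ i ∈ Finset.univ \ A', w' i * Real.log (m * p i) := by
  obtain ⟨i₀⟩ := hA
  have hm : 0 < m := lt_of_lt_of_le (hq i₀ i₀) (hqm i₀ i₀)
  have hSpos : ∀ i : I, 0 < ∑ j, q i j * w j := fun i =>
    Finset.sum_pos (fun j _ => mul_pos (hq i j) (hw j)) ⟨i₀, Finset.mem_univ i₀⟩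
  have hSle : ∀ i : I, (∑ j, q i j * w j) ≤ m := by
    intro i
    calc (∑ j, q i j * w j) ≤ ∑ j, m * w j :=
          Finset.sum_le_sum (fun j _ => mul_le_mul_of_nonneg_right (hqm i j) (hw j).le)
      _ = m := by rw [← Finset.mul_sum, hwsum, mul_one]
  -- term (a)
  have ha : Real.log (∑ i ∈ A, p i * w i) ≤ Real.log (∑ i, p i * w i) := by
    apply Real.log_le_log
    · exact Finset.sum_pos (fun i hi => mul_pos (hp i) (hw i)) ⟨i₀, ‹i₀ ∈ A›⟩
    · exact Finset.sum_le_sum_of_subset_of_nonneg (Finset.subset_univ A)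
        (fun i _ _ => (mul_pos (hp i) (hw i)).le)
  -- term (b)
  have hb : (∑ i, w' i * Real.log (p i * ∑ j, q i j * w j)) ≤
      (∑ i ∈ A', w' i * Real.log (p i * ∑ j, q i j * w j))
        + ∑ i ∈ Finset.univ \ A', w' i * Real.log (m * p i) := by
    rw [← Finset.sum_sdiff (Finset.subset_univ A'), add_comm]
    apply add_le_add_right
    apply Finset.sum_le_sum
    intro i hi
    apply mul_le_mul_of_nonneg_left _ (hw' i)
    apply Real.log_le_log (mul_pos (hp i) (hSpos i))
    rw [mul_comm m (p i)]
    exact mul_le_mul_of_nonneg_left (hSle i) (hp i).le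
  linarith
end

section
/- Let I be a finite index set, let w : I → ℝ satisfy w i > 0 for all i ∈ I and ∑_{i ∈ I} w i = 1, let p : I → ℝ satisfy 0 < p i ≤ n for all i ∈ I, and let A ⊆ A' ⊆ I with A nonempty. Then log(∑_{i ∈ A'} p i · w i + n · (1 − ∑_{i ∈ A'} w i)) ≤ log(∑_{i ∈ A} p i · w i + n · (1 − ∑_{i ∈ A} w i)). That is, the Theorem 2 upper bound on term (a) is monotonically nonincreasing in the simplification level (Assumption 1 holds for this bound). -/
/-- The Theorem 2 upper bound on term (a) is monotonically nonincreasing in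
the simplification level (Assumption 1 holds for this bound). -/
theorem stmt_9 {I : Type*} [Fintype I]
    (w p : I → ℝ) (n : ℝ)
    (hw : ∀ i, 0 < w i) (hwsum : ∑ i, w i = 1)
    (hp : ∀ i, 0 < p i) (hpn : ∀ i, p i ≤ n)
    (A A' : Finset I) (hAA' : A ⊆ A') (hA : A.Nonempty) :
    Real.log ((∑ i ∈ A', p i * w i) + n * (1 - ∑ i ∈ A', w i)) ≤
      Real.log ((∑ i ∈ A, p i * w i) + n * (1 - ∑ i ∈ A, w i)) := by
  classical
  have hwA' : ∑ i ∈ A', w i ≤ 1 := by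
    rw [← hwsum]
    exact Finset.sum_le_sum_of_subset_of_nonneg (Finset.subset_univ A')
      (fun i _ _ => (hw i).le)
  have hn : 0 < n := lt_of_lt_of_le (hp hA.choose) (hpn hA.choose)
  have hposA' : 0 < (∑ i ∈ A', p i * w i) + n * (1 - ∑ i ∈ A', w i) := by
    have h1 : 0 < ∑ i ∈ A', p i * w i :=
      Finset.sum_pos (fun i _ => mul_pos (hp i) (hw i)) ⟨hA.choose, hAA' hA.choose_spec⟩
    have h2 : 0 ≤ n * (1 - ∑ i ∈ A', w i) :=
      mul_nonneg hn.le (by linarith)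
    linarith
  apply Real.log_le_log hposA'
  have hsplit : ∑ i ∈ A', p i * w i = (∑ i ∈ A, p i * w i) + ∑ i ∈ A' \ A, p i * w i := by
    rw [← Finset.sum_union Finset.disjoint_sdiff, Finset.union_sdiff_of_subset hAA']
  have hsplitw : ∑ i ∈ A', w i = (∑ i ∈ A, w i) + ∑ i ∈ A' \ A, w i := by
    rw [← Finset.sum_union Finset.disjoint_sdiff, Finset.union_sdiff_of_subset hAA']
  have hkey : ∑ i ∈ A' \ A, p i * w i ≤ ∑ i ∈ A' \ A, n * w i :=
    Finset.sum_le_sum (fun i _ => mul_le_mul_of_nonneg_right (hpn i) (hw i).le)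
  rw [hsplit, hsplitw]
  rw [← Finset.mul_sum] at hkey
  linarith
end

section
/- Let I be a finite index set, let w : I → ℝ satisfy w j > 0 for all j ∈ I and ∑_{j ∈ I} w j = 1, let w' : I → ℝ satisfy w' i ≥ 0 for all i ∈ I, let p : I → ℝ satisfy p i > 0 for all i ∈ I, let q : I × I → ℝ satisfy 0 < q i j ≤ m for all i, j ∈ I, and let A ⊆ A' ⊆ I. Then −∑_{i ∈ A} w' i · log(p i · ∑_{j ∈ I} q i j · w j) − ∑_{i ∈ I \ A} w' i · log(m · p i) ≤ −∑_{i ∈ A'} w' i · log(p i · ∑_{j ∈ I} q i j · w j) − ∑_{i ∈ I \ A'} w' i · log(m · p i). That is, the Theorem 3 lower bound on term (b) is monotonically nondecreasing in the simplification level (Assumption 1 holds for this bound). -/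
/-- The Theorem 3 lower bound on term (b) is monotonically nondecreasing in
the simplification level (Assumption 1 holds for this bound). -/
theorem stmt_11 {I : Type*} [Fintype I] [DecidableEq I]
    (w w' p : I → ℝ) (q : I → I → ℝ) (m : ℝ)
    (hw : ∀ j, 0 < w j) (hwsum : ∑ j, w j = 1)
    (hw' : ∀ i, 0 ≤ w' i)
    (hp : ∀ i, 0 < p i)
    (hq : ∀ i j, 0 < q i j) (hqm : ∀ i j, q i j ≤ m)
    (A A' : Finset I) (hAA' : A ⊆ A') :
    (-∑ i ∈ A, w' i * Real.log (p i * ∑ j, q i j * w j))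
        - ∑ i ∈ Finset.univ \ A, w' i * Real.log (m * p i) ≤
      (-∑ i ∈ A', w' i * Real.log (p i * ∑ j, q i j * w j))
        - ∑ i ∈ Finset.univ \ A', w' i * Real.log (m * p i) := by
  classical
  have hne : (Finset.univ : Finset I).Nonempty := by
    rcases (Finset.univ : Finset I).eq_empty_or_nonempty with h | h
    · rw [h, Finset.sum_empty] at hwsum; norm_num at hwsum
    · exact h
  have hA' : A' ⊆ Finset.univ := Finset.subset_univ _
  have hsplit1 : ∑ i ∈ A', w' i * Real.log (p i * ∑ j, q i j * w j)
      = (∑ i ∈ A' \ A, w' i * Real.log (p i * ∑ j, q i j * w j))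
        + ∑ i ∈ A, w' i * Real.log (p i * ∑ j, q i j * w j) :=
    (Finset.sum_sdiff hAA').symm
  have hsub : Finset.univ \ A' ⊆ Finset.univ \ A :=
    Finset.sdiff_subset_sdiff (le_refl _) hAA'
  have hset : (Finset.univ \ A) \ (Finset.univ \ A') = A' \ A := by
    ext x; simp [Finset.mem_sdiff]; tauto
  have hsplit2 : ∑ i ∈ Finset.univ \ A, w' i * Real.log (m * p i)
      = (∑ i ∈ A' \ A, w' i * Real.log (m * p i))
        + ∑ i ∈ Finset.univ \ A', w' i * Real.log (m * p i) := by
    rw [← Finset.sum_sdiff hsub, hset]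
  rw [hsplit1, hsplit2]
  have key : ∀ i, w' i * Real.log (p i * ∑ j, q i j * w j)
      ≤ w' i * Real.log (m * p i) := by
    intro i
    apply mul_le_mul_of_nonneg_left _ (hw' i)
    apply Real.log_le_log
    · exact mul_pos (hp i) (Finset.sum_pos (fun j _ => mul_pos (hq i j) (hw j))
        hne)
    · rw [mul_comm (m) (p i)]
      apply mul_le_mul_of_nonneg_left _ (hp i).le
      calc ∑ j, q i j * w j ≤ ∑ j, m * w j :=
            Finset.sum_le_sum (fun j _ =>
              mul_le_mul_of_nonneg_right (hqm i j) (hw j).le)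
        _ = m := by rw [← Finset.mul_sum, hwsum, mul_one]
  have := Finset.sum_le_sum (fun i (_ : i ∈ A' \ A) => key i)
  linarith
end
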